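/- Let C be an abelian category satisfying AB5 (filtered colimits exist and are exact). For any directed system X₀ → X₁ → X₂ → ⋯ of cochain complexes in C, the canonical map from the homotopy colimit hocolim Xₙ := cone(⊕ₙ Xₙ → ⊕ₙ Xₙ), where the map sends x in the n-th summand to (x, −fₙ(x)), to the ordinary (termwise) colimit colim Xₙ, is a quasi-isomorphism. -/

import Mathlib

/-!
Statement 16: Let `C` be an AB5 abelian category.  For a directed system
`X₀ → X₁ → ⋯` of cochain complexes in `C`, the canonical map from the homotopy colimit
`hocolim Xₙ = cone(⊕ₙ Xₙ → ⊕ₙ Xₙ)` (where the map sends `x` in the `n`-th summand to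
`(x, −fₙ x)`) to the ordinary (termwise) colimit — realized, as in the context, as the
cokernel of this map — is a quasi-isomorphism.
-/

open CategoryTheory CategoryTheory.Limits CochainComplex CochainComplex.HomComplex


namespace HocolimAux

universe v u

set_option linter.unusedSectionVars false
set_option synthInstance.maxHeartbeats 1000000

set_option maxHeartbeats 1000000

variable {C : Type u} [Category.{v} C] [Abelian C] [HasColimitsOfSize.{0, 0} C]

variable (Y : ℕ → C) (g : ∀ n, Y n ⟶ Y (n + 1))

/-- partial coproduct -/
noncomputable abbrev P (n : ℕ) : C := ∐ (fun k : Fin (n + 1) => Y k)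

/-- inclusion of partial coproducts -/
noncomputable def σ (n : ℕ) : P Y n ⟶ P Y (n + 1) :=
  Sigma.desc fun k => Sigma.ι (fun k : Fin (n + 2) => Y k) ⟨(k : ℕ), by omega⟩

@[simp] lemma ι_σ (n : ℕ) (k : Fin (n + 1)) :
    Sigma.ι (fun k : Fin (n + 1) => Y k) k ≫ σ Y n =
      Sigma.ι (fun k : Fin (n + 2) => Y k) ⟨(k : ℕ), by omega⟩ := by
  simp [σ]

noncomputable def A : ℕ ⥤ C := Functor.ofSequence (σ Y)

@[simp] lemma A_obj (n : ℕ) : (A Y).obj n = P Y n := rfl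

@[simp] lemma A_map_succ (n : ℕ) :
    (A Y).map (homOfLE (Nat.le_add_right n 1)) = σ Y n :=
  Functor.ofSequence_map_homOfLE_succ _ n

lemma ι_A_map (m n : ℕ) (h : m ≤ n) (k : Fin (m + 1)) :
    Sigma.ι (fun k : Fin (m + 1) => Y k) k ≫ (A Y).map (homOfLE h) =
      Sigma.ι (fun j : Fin (n + 1) => Y j) ⟨(k : ℕ), by omega⟩ := by
  induction n, h using Nat.le_induction with
  | base =>
    have h1 : (homOfLE (le_refl m) : m ⟶ m) = 𝟙 m := rfl
    rw [h1, CategoryTheory.Functor.map_id]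
    simp
  | succ n hmn ih =>
    have h1 : (homOfLE (show m ≤ n + 1 by omega) : m ⟶ n + 1) =
        homOfLE hmn ≫ homOfLE (Nat.le_add_right n 1) := rfl
    rw [h1, Functor.map_comp]; erw [← Category.assoc, ih, A_map_succ, ι_σ]

/-- the 1 - shift map on partial coproducts -/
noncomputable def vApp (n : ℕ) : P Y n ⟶ P Y (n + 1) :=
  Sigma.desc fun k => Sigma.ι (fun j : Fin (n + 2) => Y j) ⟨(k : ℕ), by omega⟩ -
    (g k ≫ Sigma.ι (fun j : Fin (n + 2) => Y j) ⟨(k : ℕ) + 1, by omega⟩)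

@[simp] lemma ι_vApp (n : ℕ) (k : Fin (n + 1)) :
    Sigma.ι (fun k : Fin (n + 1) => Y k) k ≫ vApp Y g n =
      Sigma.ι (fun j : Fin (n + 2) => Y j) ⟨(k : ℕ), by omega⟩ -
        (g k ≫ Sigma.ι (fun j : Fin (n + 2) => Y j) ⟨(k : ℕ) + 1, by omega⟩) := by
  simp [vApp]

noncomputable def G : ℕ ⥤ C := Functor.ofSequence g

@[simp] lemma G_obj (n : ℕ) : (G Y g).obj n = Y n := rfl

/-- the triangular map -/
noncomputable def T (n : ℕ) : P Y (n + 1) ⟶ P Y (n + 1) :=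
  Sigma.desc fun k => ∑ j : Fin (n + 2),
    if h : (k : ℕ) ≤ (j : ℕ) then
      ((G Y g).map (homOfLE h) ≫ Sigma.ι (fun j : Fin (n + 2) => Y j) j : Y k ⟶ P Y (n + 1))
    else 0

@[simp] lemma ι_T (n : ℕ) (k : Fin (n + 2)) :
    Sigma.ι (fun j : Fin (n + 2) => Y j) k ≫ T Y g n =
      ∑ j : Fin (n + 2), if h : (k : ℕ) ≤ (j : ℕ) then
        ((G Y g).map (homOfLE h) ≫ Sigma.ι (fun j : Fin (n + 2) => Y j) j : Y k ⟶ P Y (n + 1))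
      else 0 := by
  simp [T]

lemma mono_σ (n : ℕ) : Mono (σ Y n) := by
  have : IsSplitMono (σ Y n) := IsSplitMono.mk'
    { retraction := Sigma.desc fun k : Fin (n + 2) =>
        if h : (k : ℕ) ≤ n then Sigma.ι (fun j : Fin (n + 1) => Y j) ⟨(k : ℕ), by omega⟩
        else 0
      id := by
        apply Sigma.hom_ext
        intro k
        rw [← Category.assoc, ι_σ, colimit.ι_desc]
        have hk : ((⟨(k : ℕ), by omega⟩ : Fin (n + 2)) : ℕ) ≤ n := by
          have := k.isLt; simp; omega
        simp only [Cofan.mk_ι_app, hk, dif_pos]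
        simp }
  exact IsSplitMono.mono (σ Y n)

lemma vApp_comp_T (n : ℕ) : vApp Y g n ≫ T Y g n = σ Y n := by
  apply Sigma.hom_ext
  intro k
  rw [← Category.assoc, ι_vApp, ι_σ, Preadditive.sub_comp, Category.assoc, ι_T, ι_T,
    Preadditive.comp_sum, ← Finset.sum_sub_distrib]
  have key : ∀ j : Fin (n + 2),
      ((if h : (k : ℕ) ≤ (j : ℕ) then
        ((G Y g).map (homOfLE h) ≫ Sigma.ι (fun j : Fin (n + 2) => Y j) j : Y k ⟶ P Y (n + 1))
        else 0) -
      (g k ≫ (if h : (k : ℕ) + 1 ≤ (j : ℕ) then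
        ((G Y g).map (homOfLE h) ≫ Sigma.ι (fun j : Fin (n + 2) => Y j) j :
          Y ((k : ℕ) + 1) ⟶ P Y (n + 1)) else 0))) =
      if j = ⟨(k : ℕ), by omega⟩ then
        (Sigma.ι (fun j : Fin (n + 2) => Y j) ⟨(k : ℕ), by omega⟩ : Y k ⟶ P Y (n + 1))
      else 0 := by
    rintro ⟨jv, hjv⟩
    by_cases h1 : (k : ℕ) ≤ jv
    · by_cases h2 : (k : ℕ) + 1 ≤ jv
      · have hj : ¬ ((⟨jv, hjv⟩ : Fin (n + 2)) = ⟨(k : ℕ), by omega⟩) := by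
          simp only [Fin.mk.injEq]
          omega
        rw [dif_pos h1, dif_pos h2, if_neg hj]; erw [← Category.assoc]
        have e2 : g (k : ℕ) ≫ (G Y g).map (homOfLE h2) = (G Y g).map (homOfLE h1) := by
          have e1 : (g (k : ℕ) : Y k ⟶ Y ((k : ℕ) + 1)) =
              (G Y g).map (homOfLE (Nat.le_add_right (k : ℕ) 1)) :=
            (Functor.ofSequence_map_homOfLE_succ g (k : ℕ)).symm
          rw [e1]; erw [← Functor.map_comp]
          rfl
        rw [e2, sub_self]
      · have hjk : jv = (k : ℕ) := by omega
        subst hjk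
        rw [dif_pos h1, dif_neg h2, if_pos rfl, comp_zero, sub_zero]
        have e1 : (homOfLE h1 : (k : ℕ) ⟶ (k : ℕ)) = 𝟙 ((k : ℕ) : ℕ) := rfl
        rw [e1, CategoryTheory.Functor.map_id]
        exact Category.id_comp _
    · have h2 : ¬ ((k : ℕ) + 1 ≤ jv) := by omega
      have hj : ¬ ((⟨jv, hjv⟩ : Fin (n + 2)) = ⟨(k : ℕ), by omega⟩) := by
        simp only [Fin.mk.injEq]
        omega
      rw [dif_neg h1, dif_neg h2, if_neg hj, comp_zero, sub_zero]
  rw [Finset.sum_congr rfl (fun j _ => key j)]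
  simp

lemma mono_vApp (n : ℕ) : Mono (vApp Y g n) := by
  have h : Mono (vApp Y g n ≫ T Y g n) := by
    rw [vApp_comp_T]; exact mono_σ Y n
  exact mono_of_mono (vApp Y g n) (T Y g n)

variable [HasFilteredColimits C] [AB5 C]

/-- map from partial coproduct to full coproduct -/
noncomputable def c (n : ℕ) : P Y n ⟶ ∐ Y :=
  Sigma.desc fun k => Sigma.ι Y k

@[simp] lemma ι_c (n : ℕ) (k : Fin (n + 1)) :
    Sigma.ι (fun k : Fin (n + 1) => Y k) k ≫ c Y n = Sigma.ι Y k := by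
  simp [c]

lemma σ_c (n : ℕ) : σ Y n ≫ c Y (n + 1) = c Y n := by
  apply Sigma.hom_ext
  intro k
  rw [← Category.assoc, ι_σ, ι_c, ι_c]

/-- cocone over `A` with apex the full coproduct -/
noncomputable def cA : Cocone (A Y) where
  pt := ∐ Y
  ι := NatTrans.ofSequence (F := A Y) (G := (Functor.const ℕ).obj (∐ Y))
    (fun n => c Y n)
    (fun n => by
      rw [A_map_succ]; erw [σ_c]
      simp)

@[simp] lemma cA_ι_app (n : ℕ) : (cA Y).ι.app n = c Y n := rfl

noncomputable def hA : IsColimit (cA Y) where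
  desc s := Sigma.desc fun n =>
    Sigma.ι (fun k : Fin (n + 1) => Y k) (Fin.last n) ≫ s.ι.app n
  fac s n := by
    apply Sigma.hom_ext
    intro k
    erw [← Category.assoc]
    erw [ι_c]
    erw [colimit.ι_desc]
    dsimp
    rw [← s.w (homOfLE (show ((k : ℕ) : ℕ) ≤ n by omega))]; erw [← Category.assoc]
    erw [ι_A_map]
    congr 1
  uniq s m hm := by
    apply Sigma.hom_ext
    intro n
    rw [colimit.ι_desc]
    dsimp
    rw [← hm n]; erw [← Category.assoc]
    erw [ι_c]
    simp
    rfl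


noncomputable def B : ℕ ⥤ C := Functor.ofSequence (fun n => σ Y (n + 1))

@[simp] lemma B_obj (n : ℕ) : (B Y).obj n = P Y (n + 1) := rfl

@[simp] lemma B_map_succ (n : ℕ) :
    (B Y).map (homOfLE (Nat.le_add_right n 1)) = σ Y (n + 1) :=
  Functor.ofSequence_map_homOfLE_succ _ n

lemma ι_B_map (m n : ℕ) (h : m ≤ n) (k : Fin (m + 2)) :
    Sigma.ι (fun k : Fin (m + 2) => Y k) k ≫ (B Y).map (homOfLE h) =
      Sigma.ι (fun j : Fin (n + 2) => Y j) ⟨(k : ℕ), by omega⟩ := by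
  induction n, h using Nat.le_induction with
  | base =>
    have h1 : (homOfLE (le_refl m) : m ⟶ m) = 𝟙 m := rfl
    rw [h1, CategoryTheory.Functor.map_id]
    simp
  | succ n hmn ih =>
    have h1 : (homOfLE (show m ≤ n + 1 by omega) : m ⟶ n + 1) =
        homOfLE hmn ≫ homOfLE (Nat.le_add_right n 1) := rfl
    rw [h1, Functor.map_comp]; erw [← Category.assoc, ih, B_map_succ, ι_σ]

lemma σ_vApp (n : ℕ) : σ Y n ≫ vApp Y g (n + 1) = vApp Y g n ≫ σ Y (n + 1) := by
  apply Sigma.hom_ext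
  intro k
  rw [← Category.assoc, ι_σ, ι_vApp, ← Category.assoc, ι_vApp, Preadditive.sub_comp,
    Category.assoc, ι_σ, ι_σ]

/-- the natural transformation given by the `1 - shift` maps -/
noncomputable def τ : A Y ⟶ B Y :=
  NatTrans.ofSequence (F := A Y) (G := B Y) (fun n => vApp Y g n)
    (fun n => by rw [A_map_succ, B_map_succ]; erw [σ_vApp]; rfl)

@[simp] lemma τ_app (n : ℕ) : (τ Y g).app n = vApp Y g n := rfl

/-- cocone over `B` with apex the full coproduct -/
noncomputable def cB : Cocone (B Y) where
  pt := ∐ Y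
  ι := NatTrans.ofSequence (F := B Y) (G := (Functor.const ℕ).obj (∐ Y))
    (fun n => c Y (n + 1))
    (fun n => by
      rw [B_map_succ]; erw [σ_c]
      simp)

@[simp] lemma cB_ι_app (n : ℕ) : (cB Y).ι.app n = c Y (n + 1) := rfl

noncomputable def hB : IsColimit (cB Y) where
  desc s := Sigma.desc fun n =>
    Sigma.ι (fun k : Fin (n + 2) => Y k) ⟨n, by omega⟩ ≫ s.ι.app n
  fac s n := by
    apply Sigma.hom_ext
    intro k
    erw [← Category.assoc]
    erw [ι_c]
    erw [colimit.ι_desc]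
    dsimp
    by_cases hk : (k : ℕ) ≤ n
    · rw [← s.w (homOfLE hk)]; erw [← Category.assoc]
      erw [ι_B_map]
      rfl
    · obtain ⟨kv, hkv⟩ := k
      simp only at hk
      have hkn : kv = n + 1 := by omega
      subst hkn
      rw [← s.w (homOfLE (Nat.le_add_right n 1))]
      rw [B_map_succ]; erw [← Category.assoc, ι_σ]
      rfl
  uniq s m hm := by
    apply Sigma.hom_ext
    intro n
    rw [colimit.ι_desc]
    dsimp
    have h0 : Sigma.ι Y n =
        Sigma.ι (fun k : Fin (n + 2) => Y k) ⟨n, by omega⟩ ≫ c Y (n + 1) := by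
      rw [ι_c]
    rw [h0]; erw [Category.assoc]
    erw [hm n]

section Transfer

lemma mono_of_isColimit {J : Type v} [SmallCategory J] [IsFiltered J]
    {A' B' : J ⥤ C} (t : A' ⟶ B') (ht : ∀ j, Mono (t.app j))
    {cA' : Cocone A'} {cB' : Cocone B'} (hA' : IsColimit cA') (hB' : IsColimit cB')
    (v : cA'.pt ⟶ cB'.pt) (hv : ∀ j, cA'.ι.app j ≫ v = t.app j ≫ cB'.ι.app j) :
    Mono v := by
  haveI : HasColimit A' := HasColimit.mk ⟨cA', hA'⟩
  haveI : HasColimit B' := HasColimit.mk ⟨cB', hB'⟩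
  haveI : Mono t := NatTrans.mono_of_mono_app t
  haveI : PreservesFiniteLimits (colim (J := J) (C := C)) := (AB5OfSize.ofShape J).preservesFiniteLimits
  haveI : Mono (colim.map t) := (colim (J := J) (C := C)).map_mono t
  let e1 : cA'.pt ≅ colimit A' := hA'.coconePointUniqueUpToIso (colimit.isColimit A')
  let e2 : colimit B' ≅ cB'.pt := (colimit.isColimit B').coconePointUniqueUpToIso hB'
  have hveq : v = e1.hom ≫ colim.map t ≫ e2.hom := by
    apply hA'.hom_ext
    intro j
    rw [hv j]
    have h1 : cA'.ι.app j ≫ e1.hom = colimit.ι A' j :=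
      hA'.comp_coconePointUniqueUpToIso_hom (colimit.isColimit A') j
    have h2 : colimit.ι B' j ≫ e2.hom = cB'.ι.app j :=
      (colimit.isColimit B').comp_coconePointUniqueUpToIso_hom hB' j
    rw [reassoc_of% h1]
    have h3 : colimit.ι A' j ≫ colim.map t = t.app j ≫ colimit.ι B' j := by
      simp
    rw [reassoc_of% h3, h2]
  rw [hveq]
  infer_instance

lemma mono_of_isColimit_nat
    {A' B' : ℕ ⥤ C} (t : A' ⟶ B') (ht : ∀ j, Mono (t.app j))
    {cA' : Cocone A'} {cB' : Cocone B'} (hA' : IsColimit cA') (hB' : IsColimit cB')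
    (v : cA'.pt ⟶ cB'.pt) (hv : ∀ j, cA'.ι.app j ≫ v = t.app j ≫ cB'.ι.app j) :
    Mono v := by
  let e : ULiftHom.{v} (ULift.{v} ℕ) ≌ ℕ := (ULiftHomULiftCategory.equiv.{v, v} ℕ).symm
  exact mono_of_isColimit (Functor.whiskerLeft e.functor t) (fun j => ht _)
    (hA'.whiskerEquivalence e) (hB'.whiskerEquivalence e) v (fun j => hv _)

end Transfer

/-- the key monomorphism statement -/
lemma mono_oneSubShift :
    Mono (Sigma.desc fun n => Sigma.ι Y n - (g n ≫ Sigma.ι Y (n + 1))) := by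
  apply mono_of_isColimit_nat (τ Y g) (fun j => by rw [τ_app]; exact mono_vApp Y g j)
    (hA Y) (hB Y)
  intro n
  rw [τ_app, cA_ι_app, cB_ι_app]
  apply Sigma.hom_ext
  intro k
  erw [← Category.assoc]; erw [ι_c, colimit.ι_desc]
  dsimp
  erw [← Category.assoc, ι_vApp, Preadditive.sub_comp, Category.assoc, ι_c, ι_c]
  rfl

end HocolimAux
set_option maxHeartbeats 1000000
set_option synthInstance.maxHeartbeats 1000000

theorem hocolim_to_colim_quasiIso
    {C : Type u} [Category.{v} C] [Abelian C]
    [HasColimitsOfSize.{0, 0} C] [HasFilteredColimits C] [AB5 C]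
    (X : ℕ → CochainComplex C ℤ) (f : ∀ n, X n ⟶ X (n + 1))
    -- the `1 − shift` map `⊕ₙ Xₙ → ⊕ₙ Xₙ`:
    (u : (∐ X) ⟶ (∐ X))
    (hu : u = Sigma.desc fun n => Sigma.ι X n - (f n ≫ Sigma.ι X (n + 1)))
    (eq : δ (-1) 0 (0 : Cochain (∐ X) (cokernel u) (-1)) =
      Cochain.ofHom (u ≫ cokernel.π u)) :
    QuasiIso (CochainComplex.mappingCone.desc u 0 (cokernel.π u) eq) := by
  have hmono : Mono u := by
    apply HomologicalComplex.mono_of_mono_f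
    intro i
    let E := HomologicalComplex.eval C (ComplexShape.up ℤ) i
    haveI hv : Mono (Limits.Sigma.desc fun n =>
        Limits.Sigma.ι (fun m => E.obj (X m)) n -
          ((f n).f i ≫ Limits.Sigma.ι (fun m => E.obj (X m)) (n + 1) :
            E.obj (X n) ⟶ ∐ (fun m => E.obj (X m)))) :=
      HocolimAux.mono_oneSubShift (fun m => E.obj (X m)) (fun n => (f n).f i)
    have hcomm : (Limits.Sigma.desc fun n =>
        Limits.Sigma.ι (fun m => E.obj (X m)) n -
          ((f n).f i ≫ Limits.Sigma.ι (fun m => E.obj (X m)) (n + 1) :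
            E.obj (X n) ⟶ ∐ (fun m => E.obj (X m)))) ≫ sigmaComparison E X =
        sigmaComparison E X ≫ u.f i := by
      apply Sigma.hom_ext
      intro n
      rw [← Category.assoc, colimit.ι_desc]
      dsimp only [Cofan.mk_ι_app]
      rw [Preadditive.sub_comp]; erw [Category.assoc]; erw [ι_comp_sigmaComparison,
        ι_comp_sigmaComparison, ι_comp_sigmaComparison_assoc]
      have h1 : Sigma.ι X n ≫ u = Sigma.ι X n - (f n ≫ Sigma.ι X (n + 1)) := by
        rw [hu, colimit.ι_desc]
        rfl
      have h2 : E.map (Sigma.ι X n) ≫ u.f i =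
          E.map (Sigma.ι X n) -
            ((f n).f i ≫ E.map (Sigma.ι X (n + 1)) : E.obj (X n) ⟶ E.obj (∐ X)) := by
        calc (E.map (Sigma.ι X n) ≫ u.f i : (X n).X i ⟶ (∐ X).X i) = (Sigma.ι X n ≫ u).f i := rfl
          _ = (Sigma.ι X n - (f n ≫ Sigma.ι X (n + 1))).f i := by rw [h1]
          _ = (Sigma.ι X n).f i - (f n ≫ Sigma.ι X (n + 1)).f i :=
              HomologicalComplex.sub_f_apply _ _ i
          _ = _ := rfl
      erw [h2]
    haveI hiso : IsIso (sigmaComparison E X) := inferInstance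
    have h4 : u.f i = inv (sigmaComparison E X) ≫
        ((Limits.Sigma.desc fun n =>
          Limits.Sigma.ι (fun m => E.obj (X m)) n -
            ((f n).f i ≫ Limits.Sigma.ι (fun m => E.obj (X m)) (n + 1) :
              E.obj (X n) ⟶ ∐ (fun m => E.obj (X m)))) ≫ sigmaComparison E X) := by
      rw [hcomm]
      erw [IsIso.inv_hom_id_assoc]
    rw [h4]
    exact @mono_comp _ _ _ _ _ _ (@IsIso.mono_of_iso _ _ _ _ (inv (sigmaComparison E X)) (@IsIso.inv_isIso _ _ _ _ _ hiso)) _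
      (@mono_comp _ _ _ _ _ _ hv _ (@IsIso.mono_of_iso _ _ _ _ (sigmaComparison E X) hiso))
  have hS : (ShortComplex.mk u (cokernel.π u) (cokernel.condition u)).ShortExact :=
    ShortComplex.ShortExact.mk'
      (ShortComplex.exact_of_g_is_cokernel _ (cokernelIsCokernel u)) hmono
      coequalizer.π_epi
  have key := CochainComplex.mappingCone.quasiIso_descShortComplex hS
  exact key
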